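/- arXiv:1308.1263 — 5 statements merged into one kernel-verified Lean document; each statement's English description precedes it below -/
import Mathlib

section
/- Let P be a probability measure and ν a finite measure, both with densities p and r with respect to a σ-finite measure σ. Then ρ_α(ν,P) = ∫ r^α p^(1-α) dσ converges to P(r > 0) = ∫_{r>0} p dσ as α ↓ 0. -/
open MeasureTheory Set Filter

/-- The Hellinger transform `ρ_α(ν,P) = ∫ r^α p^(1-α) dσ` (with the integrand taken to be
`0` where `p = 0` or `r = 0`) converges to `P(r > 0) = ∫_{r>0} p dσ` as `α ↓ 0`.
Here `p` is the density of the probability measure `P` and `r` the density of the finite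
measure `ν` with respect to the σ-finite measure `σ`. -/
theorem hellinger_transform_tendsto_zero
    {X : Type*} [MeasurableSpace X] (σ : Measure X) [SigmaFinite σ]
    (p r : X → ℝ) (hp : Measurable p) (hr : Measurable r)
    (hp0 : ∀ x, 0 ≤ p x) (hr0 : ∀ x, 0 ≤ r x)
    (hpInt : Integrable p σ) (hrInt : Integrable r σ)
    (hprob : ∫ x, p x ∂σ = 1) :
    Tendsto
      (fun α : ℝ => ∫ x, (if p x = 0 ∨ r x = 0 then 0 else r x ^ α * p x ^ (1 - α)) ∂σ)
      (nhdsWithin 0 (Ioi 0))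
      (nhds (∫ x in {x | 0 < r x}, p x ∂σ)) := by
  have hs : MeasurableSet {x | 0 < r x} := measurableSet_lt measurable_const hr
  have hgind : ({x | 0 < r x}.indicator p) = fun x => if p x = 0 ∨ r x = 0 then 0 else p x := by
    funext x
    by_cases hx : 0 < r x
    · rw [Set.indicator_apply, if_pos (show x ∈ {x | 0 < r x} from hx)]
      by_cases hpx : p x = 0
      · simp [hpx]
      · have : ¬ (p x = 0 ∨ r x = 0) := by push_neg; exact ⟨hpx, ne_of_gt hx⟩
        simp [this]
    · have hrx : r x = 0 := le_antisymm (not_lt.mp hx) (hr0 x)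
      rw [Set.indicator_apply, if_neg (show x ∉ {x | 0 < r x} from hx)]
      simp [hrx]
  have hlim : (∫ x in {x | 0 < r x}, p x ∂σ)
      = ∫ x, (if p x = 0 ∨ r x = 0 then 0 else p x) ∂σ := by
    rw [← integral_indicator hs, hgind]
  rw [hlim]
  apply tendsto_integral_filter_of_dominated_convergence (fun x => r x + p x)
  · -- a.e. strong measurability
    filter_upwards with α
    have : Measurable fun x => if p x = 0 ∨ r x = 0 then (0:ℝ) else r x ^ α * p x ^ (1 - α) := by
      apply Measurable.ite
      · exact (hp (measurableSet_singleton 0)).union (hr (measurableSet_singleton 0))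
      · exact measurable_const
      · measurability
    exact this.aestronglyMeasurable
  · -- bound
    filter_upwards [Ioo_mem_nhdsGT_of_mem (by norm_num : (0:ℝ) ∈ Ico 0 1)] with α hα
    filter_upwards with x
    by_cases hx : p x = 0 ∨ r x = 0
    · simp only [hx, if_true, norm_zero]
      linarith [hr0 x, hp0 x]
    · simp only [hx, if_false]
      rw [Real.norm_of_nonneg (mul_nonneg (Real.rpow_nonneg (hr0 x) _) (Real.rpow_nonneg (hp0 x) _))]
      have hAM := Real.geom_mean_le_arith_mean2_weighted (le_of_lt hα.1)
        (by linarith [hα.2] : (0:ℝ) ≤ 1 - α) (hr0 x) (hp0 x) (by ring)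
      have h1 : α * r x ≤ r x := by nlinarith [hr0 x, hα.2.le, hα.1.le]
      have h2 : (1 - α) * p x ≤ p x := by nlinarith [hp0 x, hα.2.le, hα.1.le]
      linarith
  · exact hrInt.add hpInt
  · -- pointwise convergence
    filter_upwards with x
    by_cases hx : p x = 0 ∨ r x = 0
    · simp only [hx, if_true]
      exact tendsto_const_nhds
    · simp only [hx, if_false]
      push_neg at hx
      have hrpos : 0 < r x := lt_of_le_of_ne (hr0 x) (Ne.symm hx.2)
      have hppos : 0 < p x := lt_of_le_of_ne (hp0 x) (Ne.symm hx.1)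
      have h1 : Tendsto (fun α : ℝ => r x ^ α) (nhds 0) (nhds 1) := by
        have := (Real.continuousAt_const_rpow (ne_of_gt hrpos) (b := 0)).tendsto
        simpa using this
      have h2 : Tendsto (fun α : ℝ => p x ^ (1 - α)) (nhds 0) (nhds (p x)) := by
        have hc : ContinuousAt (fun α : ℝ => p x ^ α) 1 :=
          Real.continuousAt_const_rpow (ne_of_gt hppos)
        have hsub : Tendsto (fun α : ℝ => 1 - α) (nhds 0) (nhds 1) := by
          have : Continuous fun α : ℝ => 1 - α := by continuity
          simpa using this.tendsto 0
        have := hc.tendsto.comp hsub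
        simpa [Real.rpow_one, Function.comp_def] using this
      have := (h1.mul h2)
      rw [one_mul] at this
      exact this.mono_left nhdsWithin_le_nhds
end

section
/- Let P be a probability measure and ν a finite measure with densities p and r with respect to σ-finite σ. Then ρ_α(ν,P) = ∫ r^α p^(1-α) dσ converges to ν(p > 0) as α ↑ 1. -/
open MeasureTheory Set Filter

/-- The Hellinger transform `ρ_α(ν,P) = ∫ r^α p^(1-α) dσ` (with the integrand taken to be
`0` where `p = 0` or `r = 0`) converges to `ν(p > 0) = ∫_{p>0} r dσ` as `α ↑ 1`.
Here `p` is the density of the probability measure `P` and `r` the density of the finite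
measure `ν` with respect to the σ-finite measure `σ`. -/
theorem hellinger_transform_tendsto_one
    {X : Type*} [MeasurableSpace X] (σ : Measure X) [SigmaFinite σ]
    (p r : X → ℝ) (hp : Measurable p) (hr : Measurable r)
    (hp0 : ∀ x, 0 ≤ p x) (hr0 : ∀ x, 0 ≤ r x)
    (hpInt : Integrable p σ) (hrInt : Integrable r σ)
    (hprob : ∫ x, p x ∂σ = 1) :
    Tendsto
      (fun α : ℝ => ∫ x, (if p x = 0 ∨ r x = 0 then 0 else r x ^ α * p x ^ (1 - α)) ∂σ)
      (nhdsWithin 1 (Iio 1))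
      (nhds (∫ x in {x | 0 < p x}, r x ∂σ)) := by
  set l := nhdsWithin (1 : ℝ) (Iio 1) with hl
  have hs : MeasurableSet {x | 0 < p x} := measurableSet_lt measurable_const hp
  -- rewrite target integral
  have htarget : (∫ x in {x | 0 < p x}, r x ∂σ)
      = ∫ x, (if p x = 0 ∨ r x = 0 then 0 else r x) ∂σ := by
    rw [← integral_indicator hs]
    congr 1
    funext x
    by_cases hpx : p x = 0
    · simp [indicator, hpx, not_lt.2 (le_of_eq hpx.symm)]
    · have hpx' : 0 < p x := lt_of_le_of_ne (hp0 x) (Ne.symm hpx)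
      by_cases hrx : r x = 0
      · simp [indicator, hpx', hpx, hrx]
      · simp [indicator, hpx', hpx, hrx]
  rw [htarget]
  have h01 : ∀ᶠ α in l, α ∈ Ioo (0:ℝ) 1 := by
    exact Ioo_mem_nhdsLT_of_mem (by norm_num)
  apply tendsto_integral_filter_of_dominated_convergence (bound := fun x => r x + p x)
  · -- measurability
    filter_upwards with α
    apply Measurable.aestronglyMeasurable
    apply Measurable.ite
    · exact (hp (measurableSet_singleton 0)).union (hr (measurableSet_singleton 0))
    · exact measurable_const
    · exact (hr.pow_const α).mul (hp.pow_const (1 - α))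
  · -- domination
    filter_upwards [h01] with α hα
    filter_upwards with x
    by_cases h : p x = 0 ∨ r x = 0
    · simp only [h, if_true]
      simp [add_nonneg (hr0 x) (hp0 x)]
    · simp only [h, if_false]
      push_neg at h
      have hrx : 0 < r x := lt_of_le_of_ne (hr0 x) (Ne.symm h.2)
      have hpx : 0 < p x := lt_of_le_of_ne (hp0 x) (Ne.symm h.1)
      rw [Real.norm_eq_abs, abs_of_nonneg (by positivity)]
      calc r x ^ α * p x ^ (1 - α)
          ≤ α * r x + (1 - α) * p x :=
            Real.geom_mean_le_arith_mean2_weighted hα.1.le (by linarith [hα.2])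
              (hr0 x) (hp0 x) (by ring)
        _ ≤ r x + p x := by
            have h1 : α * r x ≤ 1 * r x :=
              mul_le_mul_of_nonneg_right hα.2.le (hr0 x)
            have h2 : (1 - α) * p x ≤ 1 * p x :=
              mul_le_mul_of_nonneg_right (by linarith [hα.1]) (hp0 x)
            linarith
  · exact hrInt.add hpInt
  · -- pointwise convergence
    filter_upwards with x
    by_cases h : p x = 0 ∨ r x = 0
    · simp only [h, if_true]
      exact tendsto_const_nhds
    · simp only [h, if_false]
      push_neg at h
      have hrx : r x ≠ 0 := h.2
      have hpx : p x ≠ 0 := h.1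
      have hcont : ContinuousAt (fun α : ℝ => r x ^ α * p x ^ (1 - α)) 1 := by
        apply ContinuousAt.mul
        · exact continuousAt_const.rpow continuousAt_id (Or.inl hrx)
        · exact continuousAt_const.rpow (continuousAt_const.sub continuousAt_id)
            (Or.inl hpx)
      have := hcont.continuousWithinAt (s := Iio 1)
      have hval : r x ^ (1:ℝ) * p x ^ (1 - (1:ℝ)) = r x := by
        simp [Real.rpow_one]
      rw [ContinuousWithinAt] at this
      simpa [hval] using this
end

section
/- Let P0, P, Q be probability measures dominated by a σ-finite measure μ with densities p0, p, q, and suppose p/q ∈ L²(Q) and p0/q ∈ L²(Q). Then P0[(p/q)^{1/2}] ≤ 1 − (1/2) H(P0,P)² + H(P0,Q) · ‖p0/q‖_{2,Q} · ‖p/q‖_{2,Q}, where H is the Hellinger distance H(P,Q)² = ∫ (√p − √q)² dμ (normalized so that ∫ √p0 √p dμ = 1 − H(P0,P)²/2). -/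
open MeasureTheory Set

/-- The squared Hellinger distance between densities: `H(P,Q)² = ∫ (√p − √q)² dμ`. -/
noncomputable def hellingerSq {X : Type*} [MeasurableSpace X] (μ : Measure X)
    (p q : X → ℝ) : ℝ :=
  ∫ x, (Real.sqrt (p x) - Real.sqrt (q x)) ^ 2 ∂μ

lemma cs_sqrt {X : Type*} [MeasurableSpace X] {μ : Measure X} {f g : X → ℝ}
    (hfm : AEStronglyMeasurable f μ) (hgm : AEStronglyMeasurable g μ)
    (hf0 : 0 ≤ᵐ[μ] f) (hg0 : 0 ≤ᵐ[μ] g)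
    (hf2 : Integrable (fun x => f x ^ 2) μ) (hg2 : Integrable (fun x => g x ^ 2) μ) :
    ∫ x, f x * g x ∂μ ≤ (∫ x, f x ^ 2 ∂μ) ^ ((1:ℝ)/2) * (∫ x, g x ^ 2 ∂μ) ^ ((1:ℝ)/2) := by
  have hpq : (2:ℝ).HolderConjugate 2 := Real.holderConjugate_iff.mpr ⟨by norm_num, by norm_num⟩
  have hf : MemLp f (ENNReal.ofReal 2) μ := by
    rw [show ENNReal.ofReal 2 = 2 by simp]
    exact (memLp_two_iff_integrable_sq hfm).mpr hf2
  have hg : MemLp g (ENNReal.ofReal 2) μ := by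
    rw [show ENNReal.ofReal 2 = 2 by simp]
    exact (memLp_two_iff_integrable_sq hgm).mpr hg2
  have h := MeasureTheory.integral_mul_le_Lp_mul_Lq_of_nonneg hpq hf0 hg0 hf hg
  have e : ∀ (h : X → ℝ), (∫ x, h x ^ (2:ℝ) ∂μ) = ∫ x, h x ^ 2 ∂μ := by
    intro h
    refine integral_congr_ae (Filter.Eventually.of_forall fun x => ?_)
    have := Real.rpow_natCast (h x) 2
    norm_num at this
    simp [this]
  rwa [e f, e g] at h

set_option maxHeartbeats 1000000 in
/-- If `p0`, `p`, `q` are probability densities w.r.t. `μ` with `q > 0` a.e. and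
`p/q, p0/q ∈ L²(Q)`, then
`P0[(p/q)^{1/2}] ≤ 1 − (1/2) H(P0,P)² + H(P0,Q) · ‖p0/q‖_{2,Q} · ‖p/q‖_{2,Q}`,
where `‖f‖_{2,Q} = (∫ f² dQ)^{1/2} = (∫ f² q dμ)^{1/2}`. -/
theorem half_moment_bound_via_hellinger
    {X : Type*} [MeasurableSpace X] (μ : Measure X) [SigmaFinite μ]
    (p0 p q : X → ℝ) (hp0m : Measurable p0) (hpm : Measurable p) (hqm : Measurable q)
    (hp00 : ∀ x, 0 ≤ p0 x) (hp0 : ∀ x, 0 ≤ p x)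
    (hqpos : ∀ᵐ x ∂μ, 0 < q x)
    (hprob0 : ∫ x, p0 x ∂μ = 1) (hprobp : ∫ x, p x ∂μ = 1) (hprobq : ∫ x, q x ∂μ = 1)
    (hL2p : Integrable (fun x => (p x / q x) ^ 2 * q x) μ)
    (hL2p0 : Integrable (fun x => (p0 x / q x) ^ 2 * q x) μ)
    (hIntHalf : Integrable (fun x => Real.sqrt (p x / q x) * p0 x) μ) :
    ∫ x, Real.sqrt (p x / q x) * p0 x ∂μ
      ≤ 1 - (1/2) * hellingerSq μ p0 p
        + Real.sqrt (hellingerSq μ p0 q)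
          * (∫ x, (p0 x / q x) ^ 2 * q x ∂μ) ^ ((1:ℝ)/2)
          * (∫ x, (p x / q x) ^ 2 * q x ∂μ) ^ ((1:ℝ)/2) := by
  have ip0 : Integrable p0 μ := by
    by_contra h; rw [integral_undef h] at hprob0; norm_num at hprob0
  have ip : Integrable p μ := by
    by_contra h; rw [integral_undef h] at hprobp; norm_num at hprobp
  have iq : Integrable q μ := by
    by_contra h; rw [integral_undef h] at hprobq; norm_num at hprobq
  have hq0 : ∀ᵐ x ∂μ, 0 ≤ q x := hqpos.mono fun x hx => hx.le
  set s : X → ℝ := fun x => Real.sqrt (p0 x * p x) with hs_def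
  have hs_m : Measurable s := (hp0m.mul hpm).sqrt
  have hs_nonneg : ∀ x, 0 ≤ s x := fun x => Real.sqrt_nonneg _
  have hs_eq : ∀ x, s x = Real.sqrt (p0 x) * Real.sqrt (p x) := fun x =>
    Real.sqrt_mul (hp00 x) _
  have hs_le : ∀ x, s x ≤ p0 x + p x := by
    intro x
    rw [hs_eq]
    nlinarith [sq_nonneg (Real.sqrt (p0 x) - Real.sqrt (p x)),
      Real.sq_sqrt (hp00 x), Real.sq_sqrt (hp0 x), Real.sqrt_nonneg (p0 x),
      Real.sqrt_nonneg (p x)]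
  have iadd : Integrable (fun x => p0 x + p x) μ := ip0.add ip
  have hs_int : Integrable s μ := by
    refine iadd.mono hs_m.aestronglyMeasurable ?_
    filter_upwards with x
    rw [Real.norm_of_nonneg (hs_nonneg x),
      Real.norm_of_nonneg (add_nonneg (hp00 x) (hp0 x))]
    exact hs_le x
  have hA : ∫ x, s x ∂μ = 1 - (1/2) * hellingerSq μ p0 p := by
    have hint : hellingerSq μ p0 p = ∫ x, (p0 x + p x - 2 * s x) ∂μ := by
      unfold hellingerSq
      refine integral_congr_ae (Filter.Eventually.of_forall fun x => ?_)
      show (Real.sqrt (p0 x) - Real.sqrt (p x)) ^ 2 = p0 x + p x - 2 * s x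
      rw [hs_eq x]
      linear_combination Real.sq_sqrt (hp00 x) + Real.sq_sqrt (hp0 x)
    rw [hint, integral_sub iadd (hs_int.const_mul 2), integral_add ip0 ip,
      integral_const_mul, hprob0, hprobp]
    ring
  have hdecomp : ∀ᵐ x ∂μ, Real.sqrt (p x / q x) * p0 x
      = s x + s x * (Real.sqrt (p0 x / q x) - 1) := by
    filter_upwards [hqpos] with x hq
    have hq' : Real.sqrt (q x) ≠ 0 := Real.sqrt_ne_zero'.mpr hq
    have key : s x * Real.sqrt (p0 x / q x) = Real.sqrt (p x / q x) * p0 x := by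
      rw [hs_eq, Real.sqrt_div (hp00 x), Real.sqrt_div (hp0 x)]
      calc Real.sqrt (p0 x) * Real.sqrt (p x) * (Real.sqrt (p0 x) / Real.sqrt (q x))
          = Real.sqrt (p x) / Real.sqrt (q x) * (Real.sqrt (p0 x) * Real.sqrt (p0 x)) := by ring
        _ = Real.sqrt (p x) / Real.sqrt (q x) * p0 x := by rw [Real.mul_self_sqrt (hp00 x)]
    have expand : s x + s x * (Real.sqrt (p0 x / q x) - 1) = s x * Real.sqrt (p0 x / q x) := by
      ring
    rw [expand, key]
  set r : X → ℝ := fun x => s x * (Real.sqrt (p0 x / q x) - 1) with hr_def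
  have hr_int : Integrable r μ := by
    refine (hIntHalf.sub hs_int).congr ?_
    filter_upwards [hdecomp] with x hx
    simp only [Pi.sub_apply, hr_def]
    linarith [hx]
  have hsplit : ∫ x, Real.sqrt (p x / q x) * p0 x ∂μ = ∫ x, s x ∂μ + ∫ x, r x ∂μ := by
    rw [← integral_add hs_int hr_int]
    exact integral_congr_ae hdecomp
  set f : X → ℝ := fun x => |Real.sqrt (p0 x / q x) - 1| * Real.sqrt (q x) with hf_def
  set g : X → ℝ := fun x =>
    Real.sqrt (p0 x / q x) * Real.sqrt (p x / q x) * Real.sqrt (q x) with hg_def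
  have hf_m : Measurable f := ((hp0m.div hqm).sqrt.sub measurable_const).abs.mul hqm.sqrt
  have hg_m : Measurable g := (((hp0m.div hqm).sqrt).mul ((hpm.div hqm).sqrt)).mul hqm.sqrt
  have hs_fact : ∀ᵐ x ∂μ, s x
      = Real.sqrt (p0 x / q x) * Real.sqrt (p x / q x) * q x := by
    filter_upwards [hqpos] with x hq
    have hq' : Real.sqrt (q x) ≠ 0 := Real.sqrt_ne_zero'.mpr hq
    have hqq : Real.sqrt (q x) * Real.sqrt (q x) = q x := Real.mul_self_sqrt hq.le
    rw [hs_eq x, Real.sqrt_div (hp00 x), Real.sqrt_div (hp0 x)]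
    calc Real.sqrt (p0 x) * Real.sqrt (p x)
        = Real.sqrt (p0 x) * Real.sqrt (p x) * (q x / q x) := by
          rw [div_self hq.ne', mul_one]
      _ = Real.sqrt (p0 x) / Real.sqrt (q x) * (Real.sqrt (p x) / Real.sqrt (q x)) * q x := by
          have hr : Real.sqrt (p0 x) / Real.sqrt (q x) * (Real.sqrt (p x) / Real.sqrt (q x)) * q x
              = Real.sqrt (p0 x) * Real.sqrt (p x) * (q x / (Real.sqrt (q x) * Real.sqrt (q x))) := by
            ring
          rw [hr, hqq]
  have habs : ∀ᵐ x ∂μ, |r x| = f x * g x := by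
    filter_upwards [hs_fact, hqpos] with x hx hq
    have hqq : Real.sqrt (q x) * Real.sqrt (q x) = q x := Real.mul_self_sqrt hq.le
    simp only [hr_def, hf_def, hg_def]
    rw [abs_mul, abs_of_nonneg (hs_nonneg x), hx]
    linear_combination (-(|Real.sqrt (p0 x / q x) - 1| * Real.sqrt (p0 x / q x)
      * Real.sqrt (p x / q x))) * hqq
  have hfg_int : Integrable (fun x => f x * g x) μ := hr_int.abs.congr habs
  have hr_le : ∫ x, r x ∂μ ≤ ∫ x, f x * g x ∂μ := by
    refine integral_mono_ae hr_int hfg_int ?_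
    filter_upwards [habs] with x hx
    calc r x ≤ |r x| := le_abs_self _
      _ = f x * g x := hx
  have hf2_eq : ∀ᵐ x ∂μ, f x ^ 2 = (Real.sqrt (p0 x) - Real.sqrt (q x)) ^ 2 := by
    filter_upwards [hqpos] with x hq
    have hq' : Real.sqrt (q x) ≠ 0 := Real.sqrt_ne_zero'.mpr hq
    simp only [hf_def]
    rw [mul_pow, sq_abs, Real.sqrt_div (hp00 x)]
    field_simp
  have hf2_int : Integrable (fun x => f x ^ 2) μ := by
    have hmain : Integrable (fun x => (Real.sqrt (p0 x) - Real.sqrt (q x)) ^ 2) μ := by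
      refine (ip0.add iq).mono ((hp0m.sqrt.sub hqm.sqrt).pow_const 2).aestronglyMeasurable ?_
      filter_upwards [hq0] with x hq
      simp only [Pi.add_apply]
      rw [Real.norm_of_nonneg (sq_nonneg _), Real.norm_of_nonneg (add_nonneg (hp00 x) hq)]
      nlinarith [Real.sq_sqrt (hp00 x), Real.sq_sqrt hq,
        mul_nonneg (Real.sqrt_nonneg (p0 x)) (Real.sqrt_nonneg (q x))]
    exact hmain.congr (hf2_eq.mono fun x hx => hx.symm)
  have hf2_val : ∫ x, f x ^ 2 ∂μ = hellingerSq μ p0 q := integral_congr_ae hf2_eq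
  set f2 : X → ℝ := fun x => (p0 x / q x) * Real.sqrt (q x) with hf2_def
  set g2 : X → ℝ := fun x => (p x / q x) * Real.sqrt (q x) with hg2_def
  have hg2_eq : ∀ᵐ x ∂μ, g x ^ 2 = f2 x * g2 x := by
    filter_upwards [hqpos] with x hq
    have h1 : Real.sqrt (p0 x / q x) ^ 2 = p0 x / q x :=
      Real.sq_sqrt (div_nonneg (hp00 x) hq.le)
    have h2 : Real.sqrt (p x / q x) ^ 2 = p x / q x :=
      Real.sq_sqrt (div_nonneg (hp0 x) hq.le)
    have hqq : Real.sqrt (q x) * Real.sqrt (q x) = q x := Real.mul_self_sqrt hq.le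
    simp only [hg_def, hf2_def, hg2_def]
    rw [mul_pow, mul_pow, h1, h2]
    ring
  have hg2_int : Integrable (fun x => g x ^ 2) μ := by
    refine (hL2p0.add hL2p).mono (hg_m.pow_const 2).aestronglyMeasurable ?_
    filter_upwards [hg2_eq, hqpos] with x hx hq
    have hqq : Real.sqrt (q x) * Real.sqrt (q x) = q x := Real.mul_self_sqrt hq.le
    have hval : g x ^ 2 = (p0 x / q x) * (p x / q x) * q x := by
      rw [hx]; simp only [hf2_def, hg2_def]
      linear_combination (p0 x / q x * (p x / q x)) * hqq
    simp only [Pi.add_apply]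
    rw [Real.norm_of_nonneg (sq_nonneg _), hval,
      Real.norm_of_nonneg (by positivity : (0:ℝ) ≤ (p0 x / q x) ^ 2 * q x + (p x / q x) ^ 2 * q x)]
    nlinarith [mul_nonneg (sq_nonneg (p0 x / q x - p x / q x)) hq.le]
  -- CS 1
  have cs1 : ∫ x, f x * g x ∂μ
      ≤ (∫ x, f x ^ 2 ∂μ) ^ ((1:ℝ)/2) * (∫ x, g x ^ 2 ∂μ) ^ ((1:ℝ)/2) :=
    cs_sqrt hf_m.aestronglyMeasurable hg_m.aestronglyMeasurable
      (Filter.Eventually.of_forall fun x => by simp only [hf_def]; positivity)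
      (Filter.Eventually.of_forall fun x => by simp only [hg_def]; positivity)
      hf2_int hg2_int
  -- CS 2
  have if2sq : Integrable (fun x => f2 x ^ 2) μ := by
    refine hL2p0.congr ?_
    filter_upwards [hqpos] with x hq
    have hqq : Real.sqrt (q x) ^ 2 = q x := Real.sq_sqrt hq.le
    simp only [hf2_def]; rw [mul_pow, hqq]
  have ig2sq : Integrable (fun x => g2 x ^ 2) μ := by
    refine hL2p.congr ?_
    filter_upwards [hqpos] with x hq
    have hqq : Real.sqrt (q x) ^ 2 = q x := Real.sq_sqrt hq.le
    simp only [hg2_def]; rw [mul_pow, hqq]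
  have e2 : ∫ x, f2 x ^ 2 ∂μ = ∫ x, (p0 x / q x) ^ 2 * q x ∂μ := by
    refine integral_congr_ae ?_
    filter_upwards [hqpos] with x hq
    have hqq : Real.sqrt (q x) ^ 2 = q x := Real.sq_sqrt hq.le
    simp only [hf2_def]; rw [mul_pow, hqq]
  have e3 : ∫ x, g2 x ^ 2 ∂μ = ∫ x, (p x / q x) ^ 2 * q x ∂μ := by
    refine integral_congr_ae ?_
    filter_upwards [hqpos] with x hq
    have hqq : Real.sqrt (q x) ^ 2 = q x := Real.sq_sqrt hq.le
    simp only [hg2_def]; rw [mul_pow, hqq]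
  have hf2_m : Measurable f2 := (hp0m.div hqm).mul hqm.sqrt
  have hg2_m : Measurable g2 := (hpm.div hqm).mul hqm.sqrt
  have hf2_nn : 0 ≤ᵐ[μ] f2 := hqpos.mono fun x hq => by
    simp only [hf2_def]
    exact mul_nonneg (div_nonneg (hp00 x) hq.le) (Real.sqrt_nonneg _)
  have hg2_nn : 0 ≤ᵐ[μ] g2 := hqpos.mono fun x hq => by
    simp only [hg2_def]
    exact mul_nonneg (div_nonneg (hp0 x) hq.le) (Real.sqrt_nonneg _)
  set N0 : ℝ := (∫ x, (p0 x / q x) ^ 2 * q x ∂μ) ^ ((1:ℝ)/2) with hN0_def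
  set N : ℝ := (∫ x, (p x / q x) ^ 2 * q x ∂μ) ^ ((1:ℝ)/2) with hN_def
  have cs2 : ∫ x, g x ^ 2 ∂μ ≤ N0 * N := by
    calc ∫ x, g x ^ 2 ∂μ = ∫ x, f2 x * g2 x ∂μ := integral_congr_ae hg2_eq
      _ ≤ (∫ x, f2 x ^ 2 ∂μ) ^ ((1:ℝ)/2) * (∫ x, g2 x ^ 2 ∂μ) ^ ((1:ℝ)/2) :=
          cs_sqrt hf2_m.aestronglyMeasurable hg2_m.aestronglyMeasurable hf2_nn hg2_nn if2sq ig2sq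
      _ = N0 * N := by rw [e2, e3]
  -- sqrt q integrable-squared and N0, N ≥ 1
  have isqq : Integrable (fun x => Real.sqrt (q x) ^ 2) μ := by
    refine iq.congr ?_
    filter_upwards [hq0] with x hq
    exact (Real.sq_sqrt hq).symm
  have hsq_nn : 0 ≤ᵐ[μ] fun x => Real.sqrt (q x) :=
    Filter.Eventually.of_forall fun x => Real.sqrt_nonneg _
  have hint_sqq : ∫ x, Real.sqrt (q x) ^ 2 ∂μ = 1 := by
    rw [← hprobq]
    refine integral_congr_ae ?_
    filter_upwards [hq0] with x hq
    exact Real.sq_sqrt hq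
  have hN0_ge : 1 ≤ N0 := by
    have h1 : ∫ x, f2 x * Real.sqrt (q x) ∂μ = 1 := by
      rw [← hprob0]
      refine integral_congr_ae ?_
      filter_upwards [hqpos] with x hq
      have hqq : Real.sqrt (q x) * Real.sqrt (q x) = q x := Real.mul_self_sqrt hq.le
      simp only [hf2_def]
      rw [mul_assoc, hqq]
      exact div_mul_cancel₀ (p0 x) hq.ne'
    have h2 := cs_sqrt hf2_m.aestronglyMeasurable hqm.sqrt.aestronglyMeasurable hf2_nn hsq_nn
      if2sq isqq
    rw [h1, hint_sqq, e2, Real.one_rpow, mul_one] at h2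
    exact h2
  have hN_ge : 1 ≤ N := by
    have h1 : ∫ x, g2 x * Real.sqrt (q x) ∂μ = 1 := by
      rw [← hprobp]
      refine integral_congr_ae ?_
      filter_upwards [hqpos] with x hq
      have hqq : Real.sqrt (q x) * Real.sqrt (q x) = q x := Real.mul_self_sqrt hq.le
      simp only [hg2_def]
      rw [mul_assoc, hqq]
      exact div_mul_cancel₀ (p x) hq.ne'
    have h2 := cs_sqrt hg2_m.aestronglyMeasurable hqm.sqrt.aestronglyMeasurable hg2_nn hsq_nn
      ig2sq isqq
    rw [h1, hint_sqq, e3, Real.one_rpow, mul_one] at h2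
    exact h2
  have hgN : (∫ x, g x ^ 2 ∂μ) ^ ((1:ℝ)/2) ≤ N0 * N := by
    have hnn : (0:ℝ) ≤ ∫ x, g x ^ 2 ∂μ := integral_nonneg fun x => sq_nonneg _
    have h1 : (∫ x, g x ^ 2 ∂μ) ^ ((1:ℝ)/2) ≤ (N0 * N) ^ ((1:ℝ)/2) :=
      Real.rpow_le_rpow hnn cs2 (by norm_num)
    have hone : 1 ≤ N0 * N := by nlinarith
    have h2 : (N0 * N) ^ ((1:ℝ)/2) ≤ (N0 * N) ^ (1:ℝ) :=
      Real.rpow_le_rpow_of_exponent_le hone (by norm_num)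
    rw [Real.rpow_one] at h2
    linarith
  -- conclusion
  have hr_bound : ∫ x, r x ∂μ ≤ Real.sqrt (hellingerSq μ p0 q) * N0 * N := by
    calc ∫ x, r x ∂μ ≤ ∫ x, f x * g x ∂μ := hr_le
      _ ≤ (∫ x, f x ^ 2 ∂μ) ^ ((1:ℝ)/2) * (∫ x, g x ^ 2 ∂μ) ^ ((1:ℝ)/2) := cs1
      _ = Real.sqrt (hellingerSq μ p0 q) * (∫ x, g x ^ 2 ∂μ) ^ ((1:ℝ)/2) := by
          rw [hf2_val, Real.sqrt_eq_rpow]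
      _ ≤ Real.sqrt (hellingerSq μ p0 q) * (N0 * N) :=
          mul_le_mul_of_nonneg_left hgN (Real.sqrt_nonneg _)
      _ = Real.sqrt (hellingerSq μ p0 q) * N0 * N := by ring
  rw [hsplit, hA]
  linarith
end

section
/- Let 𝒫 be a dominated family of probability measures on (X,A) and Π a prior on 𝒫. If P0 lies in the Hellinger support of Π (i.e. Π assigns positive mass to every Hellinger ball centered at P0), then for every n ≥ 1 the n-fold product P0ⁿ is absolutely continuous with respect to the n-fold prior predictive distribution Pₙ^Π defined by Pₙ^Π(A) = ∫ Pⁿ(A) dΠ(P). -/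
open MeasureTheory Set
open scoped ENNReal NNReal

/-- The Hellinger distance between two measures relative to a dominating measure `μ`. -/
noncomputable def hellingerDist {X : Type*} [MeasurableSpace X] (μ : Measure X)
    (P Q : Measure X) : ℝ :=
  Real.sqrt (∫ x, (Real.sqrt (P.rnDeriv μ x).toReal - Real.sqrt (Q.rnDeriv μ x).toReal) ^ 2 ∂μ)

section Aux

variable {X : Type*} [MeasurableSpace X] {β : Type*} [MeasurableSpace β]

/-- If `f ≤ 1` then `∫ f dQ ≤ ∫ f dP + ∫ (dQ/dμ - dP/dμ)⁺ dμ`. -/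
lemma lintegral_le_add_D (μ : Measure X) [SigmaFinite μ] (P Q : Measure X)
    [IsProbabilityMeasure P] [IsProbabilityMeasure Q] (hP : P ≪ μ) (hQ : Q ≪ μ)
    {f : X → ℝ≥0∞} (hf : Measurable f) (hf1 : ∀ x, f x ≤ 1) :
    ∫⁻ x, f x ∂Q ≤ ∫⁻ x, f x ∂P + ∫⁻ x, (Q.rnDeriv μ x - P.rnDeriv μ x) ∂μ := by
  rw [← lintegral_rnDeriv_mul hQ hf.aemeasurable,
      ← lintegral_rnDeriv_mul hP hf.aemeasurable,
      ← lintegral_add_right (g := fun x => Q.rnDeriv μ x - P.rnDeriv μ x) _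
        ((Q.measurable_rnDeriv μ).sub (P.measurable_rnDeriv μ))]
  refine lintegral_mono fun x => ?_
  calc Q.rnDeriv μ x * f x
      ≤ (P.rnDeriv μ x + (Q.rnDeriv μ x - P.rnDeriv μ x)) * f x := by
        gcongr; exact le_add_tsub
    _ = P.rnDeriv μ x * f x + (Q.rnDeriv μ x - P.rnDeriv μ x) * f x := add_mul _ _ _
    _ ≤ P.rnDeriv μ x * f x + (Q.rnDeriv μ x - P.rnDeriv μ x) := by
        refine add_le_add_right ?_ _
        calc (Q.rnDeriv μ x - P.rnDeriv μ x) * f x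
            ≤ (Q.rnDeriv μ x - P.rnDeriv μ x) * 1 := by gcongr; exact hf1 x
          _ = _ := mul_one _

lemma measure_le_add_D (μ : Measure X) [SigmaFinite μ] (P Q : Measure X)
    [IsProbabilityMeasure P] [IsProbabilityMeasure Q] (hP : P ≪ μ) (hQ : Q ≪ μ)
    {B : Set X} (hB : MeasurableSet B) :
    Q B ≤ P B + ∫⁻ x, (Q.rnDeriv μ x - P.rnDeriv μ x) ∂μ := by
  have h := lintegral_le_add_D μ P Q hP hQ (f := B.indicator 1)
    (measurable_one.indicator hB) (fun x => by
      by_cases hx : x ∈ B <;> simp [Set.indicator, hx])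
  simpa [lintegral_indicator_one hB] using h

lemma prod_le_add (μ : Measure X) [SigmaFinite μ] (P Q : Measure X)
    [IsProbabilityMeasure P] [IsProbabilityMeasure Q] (hP : P ≪ μ) (hQ : Q ≪ μ)
    (P' Q' : Measure β) [IsProbabilityMeasure P'] [IsProbabilityMeasure Q']
    (c : ℝ≥0∞) (h' : ∀ B' : Set β, MeasurableSet B' → Q' B' ≤ P' B' + c)
    {B : Set (X × β)} (hB : MeasurableSet B) :
    (Q.prod Q') B ≤ (P.prod P') B
      + (∫⁻ x, (Q.rnDeriv μ x - P.rnDeriv μ x) ∂μ + c) := by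
  rw [Measure.prod_apply hB, Measure.prod_apply hB]
  set D := ∫⁻ x, (Q.rnDeriv μ x - P.rnDeriv μ x) ∂μ with hD
  calc ∫⁻ x, Q' (Prod.mk x ⁻¹' B) ∂Q
      ≤ ∫⁻ x, (P' (Prod.mk x ⁻¹' B) + c) ∂Q :=
        lintegral_mono fun x => h' _ (hB.preimage measurable_prodMk_left)
    _ = ∫⁻ x, P' (Prod.mk x ⁻¹' B) ∂Q + c := by
        rw [lintegral_add_right _ measurable_const, lintegral_const, measure_univ, mul_one]
    _ ≤ (∫⁻ x, P' (Prod.mk x ⁻¹' B) ∂P + D) + c := by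
        refine add_le_add_left ?_ _
        exact lintegral_le_add_D μ P Q hP hQ
          (measurable_measure_prodMk_left hB) (fun x => prob_le_one)
    _ = ∫⁻ x, P' (Prod.mk x ⁻¹' B) ∂P + (D + c) := add_assoc _ _ _

lemma pi_le_add (μ : Measure X) [SigmaFinite μ] (P Q : Measure X)
    [IsProbabilityMeasure P] [IsProbabilityMeasure Q] (hP : P ≪ μ) (hQ : Q ≪ μ) :
    ∀ n : ℕ, ∀ B : Set (Fin n → X), MeasurableSet B →
      Measure.pi (fun _ : Fin n => Q) B ≤ Measure.pi (fun _ : Fin n => P) B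
        + n * ∫⁻ x, (Q.rnDeriv μ x - P.rnDeriv μ x) ∂μ := by
  intro n
  induction n with
  | zero =>
    intro B hB
    rw [Measure.pi_of_empty, Measure.pi_of_empty]
    simp
  | succ n ih =>
    intro B hB
    set e := MeasurableEquiv.piFinSuccAbove (fun _ : Fin (n + 1) => X) 0 with he
    have hQm := MeasureTheory.measurePreserving_piFinSuccAbove (fun _ : Fin (n + 1) => Q) 0
    have hPm := MeasureTheory.measurePreserving_piFinSuccAbove (fun _ : Fin (n + 1) => P) 0
    have hBs : MeasurableSet (e.symm ⁻¹' B) := e.symm.measurable hB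
    have hpre : e ⁻¹' (e.symm ⁻¹' B) = B := by
      ext x; simp
    have hQeq : Measure.pi (fun _ : Fin (n + 1) => Q) B
        = (Q.prod (Measure.pi fun _ : Fin n => Q)) (e.symm ⁻¹' B) := by
      rw [← hQm.map_eq, Measure.map_apply e.measurable hBs, hpre]
    have hPeq : Measure.pi (fun _ : Fin (n + 1) => P) B
        = (P.prod (Measure.pi fun _ : Fin n => P)) (e.symm ⁻¹' B) := by
      rw [← hPm.map_eq, Measure.map_apply e.measurable hBs, hpre]
    rw [hQeq, hPeq]
    have h := prod_le_add μ P Q hP hQ (Measure.pi fun _ : Fin n => P)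
      (Measure.pi fun _ : Fin n => Q)
      ((n : ℝ≥0∞) * ∫⁻ x, (Q.rnDeriv μ x - P.rnDeriv μ x) ∂μ)
      (fun B' hB' => ih B' hB') hBs
    refine h.trans (le_of_eq ?_)
    congr 1
    push_cast
    ring

/-- The positive part of the difference of densities is bounded by twice the
Hellinger distance. -/
lemma D_le_hellinger (μ : Measure X) [SigmaFinite μ] (P Q : Measure X)
    [IsProbabilityMeasure P] [IsProbabilityMeasure Q] (hP : P ≪ μ) (hQ : Q ≪ μ) :
    ∫⁻ x, (Q.rnDeriv μ x - P.rnDeriv μ x) ∂μ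
      ≤ 2 * ENNReal.ofReal (hellingerDist μ P Q) := by
  set pR : X → ℝ := fun x => (P.rnDeriv μ x).toReal with hpR
  set qR : X → ℝ := fun x => (Q.rnDeriv μ x).toReal with hqR
  have hpm : Measurable pR := (P.measurable_rnDeriv μ).ennreal_toReal
  have hqm : Measurable qR := (Q.measurable_rnDeriv μ).ennreal_toReal
  set f : X → ℝ≥0∞ := fun x => ENNReal.ofReal |Real.sqrt (pR x) - Real.sqrt (qR x)| with hf
  set g : X → ℝ≥0∞ := fun x => ENNReal.ofReal (Real.sqrt (qR x) + Real.sqrt (pR x)) with hg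
  have hfm : Measurable f :=
    ((hpm.sqrt.sub hqm.sqrt).abs).ennreal_ofReal
  have hgm : Measurable g := ((hqm.sqrt.add hpm.sqrt)).ennreal_ofReal
  -- pointwise bound
  have hpt : ∀ᵐ x ∂μ, Q.rnDeriv μ x - P.rnDeriv μ x ≤ f x * g x := by
    filter_upwards [Measure.rnDeriv_lt_top P μ, Measure.rnDeriv_lt_top Q μ] with x hp hq
    have h1 : Q.rnDeriv μ x - P.rnDeriv μ x = ENNReal.ofReal (qR x - pR x) := by
      simp only [hpR, hqR]
      rw [ENNReal.ofReal_sub _ ENNReal.toReal_nonneg,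
        ENNReal.ofReal_toReal hq.ne, ENNReal.ofReal_toReal hp.ne]
    rw [h1, ← ENNReal.ofReal_mul (abs_nonneg _)]
    refine ENNReal.ofReal_le_ofReal ?_
    have hq0 : 0 ≤ qR x := ENNReal.toReal_nonneg
    have hp0 : 0 ≤ pR x := ENNReal.toReal_nonneg
    have h2 : qR x - pR x = (Real.sqrt (qR x) - Real.sqrt (pR x))
        * (Real.sqrt (qR x) + Real.sqrt (pR x)) := by
      have := Real.sq_sqrt hq0
      have := Real.sq_sqrt hp0
      nlinarith [Real.sqrt_nonneg (qR x), Real.sqrt_nonneg (pR x)]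
    rw [h2]
    have h3 : Real.sqrt (qR x) - Real.sqrt (pR x) ≤ |Real.sqrt (qR x) - Real.sqrt (pR x)| :=
      le_abs_self _
    have h4 : 0 ≤ Real.sqrt (qR x) + Real.sqrt (pR x) := by positivity
    calc (Real.sqrt (qR x) - Real.sqrt (pR x)) * (Real.sqrt (qR x) + Real.sqrt (pR x))
        ≤ |Real.sqrt (qR x) - Real.sqrt (pR x)| * (Real.sqrt (qR x) + Real.sqrt (pR x)) := by
          gcongr
      _ = |Real.sqrt (pR x) - Real.sqrt (qR x)| * (Real.sqrt (qR x) + Real.sqrt (pR x)) := by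
          rw [abs_sub_comm]
  have hstep : ∫⁻ x, (Q.rnDeriv μ x - P.rnDeriv μ x) ∂μ ≤ ∫⁻ x, (f * g) x ∂μ :=
    lintegral_mono_ae hpt
  have hconj : (2 : ℝ).HolderConjugate 2 := by constructor <;> norm_num
  have hholder := ENNReal.lintegral_mul_le_Lp_mul_Lq μ hconj hfm.aemeasurable hgm.aemeasurable
  -- second factor ≤ 2
  have hg2 : ∫⁻ x, g x ^ (2 : ℝ) ∂μ ≤ 4 := by
    have hle : ∀ x, g x ^ (2 : ℝ) ≤ 2 * (Q.rnDeriv μ x + P.rnDeriv μ x) := by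
      intro x
      have hq0 : 0 ≤ qR x := ENNReal.toReal_nonneg
      have hp0 : 0 ≤ pR x := ENNReal.toReal_nonneg
      have h4 : 0 ≤ Real.sqrt (qR x) + Real.sqrt (pR x) := by positivity
      rw [hg, ENNReal.ofReal_rpow_of_nonneg h4 (by norm_num)]
      have hbd : (Real.sqrt (qR x) + Real.sqrt (pR x)) ^ (2 : ℝ) ≤ 2 * (qR x + pR x) := by
        rw [Real.rpow_two]
        have := Real.sq_sqrt hq0
        have := Real.sq_sqrt hp0
        nlinarith [Real.sqrt_nonneg (qR x), Real.sqrt_nonneg (pR x),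
          sq_nonneg (Real.sqrt (qR x) - Real.sqrt (pR x))]
      calc ENNReal.ofReal ((Real.sqrt (qR x) + Real.sqrt (pR x)) ^ (2 : ℝ))
          ≤ ENNReal.ofReal (2 * (qR x + pR x)) := ENNReal.ofReal_le_ofReal hbd
        _ = 2 * (ENNReal.ofReal (qR x) + ENNReal.ofReal (pR x)) := by
            rw [ENNReal.ofReal_mul (by norm_num), ENNReal.ofReal_add hq0 hp0]
            norm_num
        _ ≤ 2 * (Q.rnDeriv μ x + P.rnDeriv μ x) := by
            gcongr <;> exact ENNReal.ofReal_toReal_le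
    calc ∫⁻ x, g x ^ (2 : ℝ) ∂μ ≤ ∫⁻ x, 2 * (Q.rnDeriv μ x + P.rnDeriv μ x) ∂μ :=
          lintegral_mono hle
      _ = 2 * (∫⁻ x, Q.rnDeriv μ x ∂μ + ∫⁻ x, P.rnDeriv μ x ∂μ) := by
          rw [lintegral_const_mul (f := fun x => Q.rnDeriv μ x + P.rnDeriv μ x) _ ((Q.measurable_rnDeriv μ).add (P.measurable_rnDeriv μ)),
            lintegral_add_left (Q.measurable_rnDeriv μ)]
      _ = 4 := by
          rw [Measure.lintegral_rnDeriv hQ, Measure.lintegral_rnDeriv hP]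
          simp; norm_num
  -- first factor = ofReal (hellingerDist μ P Q)
  have hΔint : Integrable (fun x => (Real.sqrt (pR x) - Real.sqrt (qR x)) ^ 2) μ := by
    have hint : Integrable (fun x => 2 * (pR x + qR x)) μ :=
      ((Measure.integrable_toReal_rnDeriv).add (Measure.integrable_toReal_rnDeriv)).const_mul 2
    refine hint.mono' ((hpm.sqrt.sub hqm.sqrt).pow_const 2).aestronglyMeasurable ?_
    refine ae_of_all _ fun x => ?_
    have hq0 : 0 ≤ qR x := ENNReal.toReal_nonneg
    have hp0 : 0 ≤ pR x := ENNReal.toReal_nonneg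
    have := Real.sq_sqrt hq0
    have := Real.sq_sqrt hp0
    rw [Real.norm_eq_abs, abs_of_nonneg (sq_nonneg _)]
    nlinarith [Real.sqrt_nonneg (qR x), Real.sqrt_nonneg (pR x),
      sq_nonneg (Real.sqrt (pR x) + Real.sqrt (qR x))]
  have hI0 : 0 ≤ ∫ x, (Real.sqrt (pR x) - Real.sqrt (qR x)) ^ 2 ∂μ :=
    integral_nonneg fun x => sq_nonneg _
  have hf2 : ∫⁻ x, f x ^ (2 : ℝ) ∂μ
      = ENNReal.ofReal (∫ x, (Real.sqrt (pR x) - Real.sqrt (qR x)) ^ 2 ∂μ) := by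
    have hpt2 : ∀ x, f x ^ (2 : ℝ) = ENNReal.ofReal ((Real.sqrt (pR x) - Real.sqrt (qR x)) ^ 2) := by
      intro x
      simp only [hf]
      rw [ENNReal.ofReal_rpow_of_nonneg (abs_nonneg _) (by norm_num), Real.rpow_two, sq_abs]
    simp only [hpt2]
    rw [← ofReal_integral_eq_lintegral_ofReal hΔint (ae_of_all _ fun x => sq_nonneg _)]
  have hH : hellingerDist μ P Q = Real.sqrt (∫ x, (Real.sqrt (pR x) - Real.sqrt (qR x)) ^ 2 ∂μ) :=
    rfl
  -- put everything together
  have hfin : (∫⁻ x, f x ^ (2 : ℝ) ∂μ) ^ (1 / (2:ℝ)) = ENNReal.ofReal (hellingerDist μ P Q) := by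
    rw [hf2, ENNReal.ofReal_rpow_of_nonneg hI0 (by norm_num)]
    congr 1
    rw [hH, Real.sqrt_eq_rpow]
  have hgfin : (∫⁻ x, g x ^ (2 : ℝ) ∂μ) ^ (1 / (2:ℝ)) ≤ 2 := by
    have h4 : ((4 : ℝ≥0∞)) ^ ((1:ℝ) / 2) = 2 := by
      have : (4 : ℝ≥0∞) = (2 : ℝ≥0∞) ^ (2 : ℝ) := by
        rw [show (2:ℝ) = ((2:ℕ):ℝ) by norm_num, ENNReal.rpow_natCast]; norm_num
      rw [this, ← ENNReal.rpow_mul]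
      norm_num
    calc (∫⁻ x, g x ^ (2 : ℝ) ∂μ) ^ (1 / (2:ℝ)) ≤ (4 : ℝ≥0∞) ^ (1 / (2:ℝ)) := by
          exact ENNReal.rpow_le_rpow hg2 (by norm_num)
      _ = 2 := h4
  calc ∫⁻ x, (Q.rnDeriv μ x - P.rnDeriv μ x) ∂μ ≤ ∫⁻ x, (f * g) x ∂μ := hstep
    _ ≤ (∫⁻ x, f x ^ (2:ℝ) ∂μ) ^ (1 / (2:ℝ)) * (∫⁻ x, g x ^ (2:ℝ) ∂μ) ^ (1 / (2:ℝ)) := hholder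
    _ ≤ ENNReal.ofReal (hellingerDist μ P Q) * 2 := by
        rw [hfin]; exact mul_le_mul_right hgfin _
    _ = 2 * ENNReal.ofReal (hellingerDist μ P Q) := mul_comm _ _

/-- Measurability of the product-measure map on the subtype of probability measures. -/
lemma measurable_pi_eval (n : ℕ) : ∀ ⦃s : Set (Fin n → X)⦄, MeasurableSet s →
    Measurable (fun P : {P : Measure X // P Set.univ = 1} =>
      Measure.pi (fun _ : Fin n => (P : Measure X)) s) := by
  refine MeasurableSpace.induction_on_inter generateFrom_pi.symm isPiSystem_pi ?_ ?_ ?_ ?_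
  · simp only [measure_empty]; exact measurable_const
  · intro t ht
    obtain ⟨t', ht', rfl⟩ := ht
    have heq : ∀ P : {P : Measure X // P Set.univ = 1},
        Measure.pi (fun _ : Fin n => (P : Measure X)) (Set.pi Set.univ t')
          = ∏ i : Fin n, (P : Measure X) (t' i) := by
      intro P
      haveI : IsProbabilityMeasure (P : Measure X) := ⟨P.2⟩
      exact Measure.pi_pi _ _
    simp_rw [heq]
    exact Finset.measurable_prod _ fun i _ =>
      (Measure.measurable_coe (ht' i (Set.mem_univ i))).comp measurable_subtype_coe
  · intro t ht h
    have heq : ∀ P : {P : Measure X // P Set.univ = 1},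
        Measure.pi (fun _ : Fin n => (P : Measure X)) tᶜ
          = 1 - Measure.pi (fun _ : Fin n => (P : Measure X)) t := by
      intro P
      haveI : IsProbabilityMeasure (P : Measure X) := ⟨P.2⟩
      rw [measure_compl ht (measure_ne_top _ _), measure_univ]
    simp_rw [heq]
    exact h.const_sub 1
  · intro f hdisj hmeas hC
    have heq : ∀ P : {P : Measure X // P Set.univ = 1},
        Measure.pi (fun _ : Fin n => (P : Measure X)) (⋃ i, f i)
          = ∑' i, Measure.pi (fun _ : Fin n => (P : Measure X)) (f i) := fun P =>
      measure_iUnion hdisj hmeas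
    simp_rw [heq]
    exact Measurable.ennreal_tsum hC

end Aux

/-- If `P0` lies in the Hellinger support of the prior `Π` on a dominated model (i.e. every
Hellinger ball around `P0` has positive prior mass), then for every `n ≥ 1` the `n`-fold
product `P0ⁿ` is absolutely continuous w.r.t. the `n`-fold prior predictive distribution
`Pₙ^Π(A) = ∫ Pⁿ(A) dΠ(P)`. -/
theorem hellinger_support_implies_priorPredictive_dominates
    {X : Type*} [MeasurableSpace X] (μ : Measure X) [SigmaFinite μ]
    (Pri : Measure (Measure X)) [IsProbabilityMeasure Pri]
    (P0 : Measure X) [IsProbabilityMeasure P0] (hP0 : P0 ≪ μ)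
    (hmodel : ∀ᵐ P ∂Pri, IsProbabilityMeasure P ∧ P ≪ μ)
    (hsupp : ∀ ε : ℝ, 0 < ε → 0 < Pri {P | hellingerDist μ P P0 < ε}) :
    ∀ n : ℕ, 1 ≤ n →
      Measure.pi (fun _ : Fin n => P0)
        ≪ Pri.bind (fun P => Measure.pi (fun _ : Fin n => P)) := by
  intro n _
  have hSmeas : MeasurableSet {P : Measure X | P Set.univ = 1} :=
    (Measure.measurable_coe MeasurableSet.univ) (measurableSet_singleton 1)
  set F : {P : Measure X // P Set.univ = 1} → Measure (Fin n → X) :=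
    fun P => Measure.pi (fun _ : Fin n => (P : Measure X)) with hFdef
  have hF : Measurable F := Measure.measurable_measure.mpr fun s hs => measurable_pi_eval n hs
  set g : Measure X → Measure (Fin n → X) := Function.extend Subtype.val F 0 with hgdef
  have hemb : MeasurableEmbedding (Subtype.val :
      {P : Measure X // P Set.univ = 1} → Measure X) :=
    MeasurableEmbedding.subtype_coe hSmeas
  have hg : Measurable g := hemb.measurable_extend hF measurable_const
  have hgval : ∀ (P : Measure X) (h1 : P Set.univ = 1),
      g P = Measure.pi (fun _ : Fin n => P) := by
    intro P h1
    have : g (Subtype.val (⟨P, h1⟩ : {P : Measure X // P Set.univ = 1}))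
        = F ⟨P, h1⟩ := Subtype.val_injective.extend_apply F 0 ⟨P, h1⟩
    exact this
  have hae : (fun P => Measure.pi (fun _ : Fin n => P)) =ᵐ[Pri] g := by
    filter_upwards [hmodel] with P hPm
    exact (hgval P hPm.1.measure_univ).symm
  have hbind : Pri.bind (fun P => Measure.pi (fun _ : Fin n => P)) = Pri.bind g := by
    unfold Measure.bind
    rw [Measure.map_congr hae]
  refine Measure.AbsolutelyContinuous.mk fun s hs h0 => ?_
  rw [hbind, Measure.bind_apply hs hg.aemeasurable] at h0
  have hae0 : ∀ᵐ P ∂Pri, g P s = 0 :=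
    (lintegral_eq_zero_iff ((Measure.measurable_coe hs).comp hg)).mp h0
  -- key quantitative bound
  have key : ∀ δ : ℝ, 0 < δ → Measure.pi (fun _ : Fin n => P0) s ≤ ENNReal.ofReal δ := by
    intro δ hδ
    set ε : ℝ := δ / (2 * n + 2) with hεdef
    have hε : 0 < ε := by positivity
    have hpos := hsupp ε hε
    have hmeet : ({P | hellingerDist μ P P0 < ε}
        ∩ {P | (IsProbabilityMeasure P ∧ P ≪ μ) ∧ g P s = 0}).Nonempty := by
      by_contra hempty
      rw [Set.not_nonempty_iff_eq_empty] at hempty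
      have hsub : {P | hellingerDist μ P P0 < ε}
          ⊆ {P | ¬ ((IsProbabilityMeasure P ∧ P ≪ μ) ∧ g P s = 0)} := by
        intro P hP hPc
        exact absurd (Set.mem_inter hP hPc) (by rw [hempty]; exact Set.notMem_empty P)
      have h0' : Pri {P | ¬ ((IsProbabilityMeasure P ∧ P ≪ μ) ∧ g P s = 0)} = 0 := by
        have : ∀ᵐ P ∂Pri, (IsProbabilityMeasure P ∧ P ≪ μ) ∧ g P s = 0 :=
          hmodel.and hae0
        exact this
      exact hpos.ne' (le_antisymm ((measure_mono hsub).trans h0'.le) zero_le)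
    obtain ⟨P, hPd, ⟨⟨hPprob, hPac⟩, hPs⟩⟩ := hmeet
    haveI := hPprob
    have hgP : g P = Measure.pi (fun _ : Fin n => P) := hgval P hPprob.measure_univ
    have hPs' : Measure.pi (fun _ : Fin n => P) s = 0 := by rw [← hgP]; exact hPs
    have hchain := pi_le_add μ P P0 hPac hP0 n s hs
    rw [hPs', zero_add] at hchain
    have hD := D_le_hellinger μ P P0 hPac hP0
    have hH : hellingerDist μ P P0 < ε := hPd
    calc Measure.pi (fun _ : Fin n => P0) s
        ≤ (n : ℝ≥0∞) * ∫⁻ x, (P0.rnDeriv μ x - P.rnDeriv μ x) ∂μ := hchain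
      _ ≤ (n : ℝ≥0∞) * (2 * ENNReal.ofReal (hellingerDist μ P P0)) := by gcongr
      _ ≤ (n : ℝ≥0∞) * (2 * ENNReal.ofReal ε) := by
          gcongr
      _ ≤ ((2 * n + 2 : ℕ) : ℝ≥0∞) * ENNReal.ofReal ε := by
          rw [← mul_assoc]
          gcongr
          push_cast
          calc (n : ℝ≥0∞) * 2 = 2 * n := mul_comm _ _
            _ ≤ 2 * n + 2 := le_self_add
      _ = ENNReal.ofReal (((2 * n + 2 : ℕ) : ℝ) * ε) := by
          rw [ENNReal.ofReal_mul (by positivity), ENNReal.ofReal_natCast]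
      _ = ENNReal.ofReal δ := by
          congr 1
          rw [hεdef]
          have h2 : ((2 * n + 2 : ℕ) : ℝ) = 2 * (n : ℝ) + 2 := by push_cast; ring
          rw [h2]
          field_simp
  have hle : Measure.pi (fun _ : Fin n => P0) s ≤ 0 := by
    refine ENNReal.le_of_forall_pos_le_add fun ε hε _ => ?_
    have := key ε (by exact_mod_cast hε)
    simpa [ENNReal.ofReal_coe_nnreal] using this
  exact le_antisymm hle zero_le
end

section
/- Let r > 1 and s be conjugate exponents (1/r + 1/s = 1), and let P0, P, Q be probability measures with μ-densities p0, p, q. Then P0[(p/q)^{1/r}] ≤ ρ_{1/r}(P0, P) + d_r(P0, Q) · (P0[(p/q)^{s/r}])^{1/s}, where ρ_{1/r}(P0,P) = ∫ p0^{1−1/r} p^{1/r} dμ is the Hellinger transform and d_r(P,Q) = (∫|p^{1/r} − q^{1/r}|^r dμ)^{1/r} is Matusita's r-metric distance. -/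
open MeasureTheory Set
open scoped ENNReal

lemma memLp_of_integrable_abs_rpow {X : Type*} [MeasurableSpace X] {μ : Measure X} {f : X → ℝ}
    (hf : AEStronglyMeasurable f μ) {t : ℝ} (ht : 0 < t)
    (h : Integrable (fun x => |f x| ^ t) μ) : MemLp f (ENNReal.ofReal t) μ := by
  have ht0 : ENNReal.ofReal t ≠ 0 := by
    simp only [ne_eq, ENNReal.ofReal_eq_zero, not_le]; exact ht
  have httop : ENNReal.ofReal t ≠ ∞ := ENNReal.ofReal_ne_top
  have H := (memLp_norm_rpow_iff (q := ENNReal.ofReal t) (p := ENNReal.ofReal t) hf ht0 httop).mp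
  rw [ENNReal.div_self ht0 httop, ENNReal.toReal_ofReal ht.le] at H
  apply H
  rw [memLp_one_iff_integrable]
  simpa [Real.norm_eq_abs] using h

/-- Hölder bound through Matusita's `r`-metric: for conjugate exponents `r, s > 1` and
probability densities `p0, p, q` w.r.t. `μ`,
`P0[(p/q)^{1/r}] ≤ ρ_{1/r}(P0,P) + d_r(P0,Q) · (P0[(p/q)^{s/r}])^{1/s}`, where
`ρ_{1/r}(P0,P) = ∫ p0^{1−1/r} p^{1/r} dμ` is the Hellinger transform and
`d_r(P,Q) = (∫|p^{1/r}−q^{1/r}|^r dμ)^{1/r}` is Matusita's `r`-metric distance. -/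
theorem matusita_moment_bound
    {X : Type*} [MeasurableSpace X] (μ : Measure X) [SigmaFinite μ]
    (r s : ℝ) (hr : 1 < r) (hrs : 1 / r + 1 / s = 1)
    (p0 p q : X → ℝ) (hp0m : Measurable p0) (hpm : Measurable p) (hqm : Measurable q)
    (hp00 : ∀ x, 0 ≤ p0 x) (hp0 : ∀ x, 0 ≤ p x) (hq0 : ∀ x, 0 ≤ q x)
    (hprob0 : ∫ x, p0 x ∂μ = 1) (hprobp : ∫ x, p x ∂μ = 1) (hprobq : ∫ x, q x ∂μ = 1)
    (hqpos : ∀ᵐ x ∂μ, 0 < p0 x * p x → 0 < q x)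
    (hIntLHS : Integrable (fun x => (p x / q x) ^ (1 / r) * p0 x) μ)
    (hIntHT : Integrable (fun x => p0 x ^ (1 - 1 / r) * p x ^ (1 / r)) μ)
    (hIntdr : Integrable (fun x => |p0 x ^ (1 / r) - q x ^ (1 / r)| ^ r) μ)
    (hIntsr : Integrable (fun x => (p x / q x) ^ (s / r) * p0 x) μ) :
    ∫ x, (p x / q x) ^ (1 / r) * p0 x ∂μ
      ≤ (∫ x, p0 x ^ (1 - 1 / r) * p x ^ (1 / r) ∂μ)
        + (∫ x, |p0 x ^ (1 / r) - q x ^ (1 / r)| ^ r ∂μ) ^ (1 / r)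
          * (∫ x, (p x / q x) ^ (s / r) * p0 x ∂μ) ^ (1 / s) := by
  have hr0 : (0:ℝ) < r := lt_trans one_pos hr
  have hsinv : 1 / s = 1 - 1 / r := by linarith
  have hs0 : (0:ℝ) < s := by
    have h1 : (0:ℝ) < 1 / s := by
      rw [hsinv]
      have : 1 / r < 1 := by rw [div_lt_one hr0]; exact hr
      linarith
    exact one_div_pos.mp h1
  have hconj : r.HolderConjugate s := ⟨by rw [inv_one, ← one_div, ← one_div]; exact hrs, hr0, hs0⟩
  set g : X → ℝ := fun x => |p0 x ^ (1 / r) - q x ^ (1 / r)| with hg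
  set h : X → ℝ := fun x => p0 x ^ (1 - 1 / r) * (p x / q x) ^ (1 / r) with hh
  have hg0 : ∀ x, 0 ≤ g x := fun x => abs_nonneg _
  have hh0 : ∀ x, 0 ≤ h x := fun x =>
    mul_nonneg (Real.rpow_nonneg (hp00 x) _) (Real.rpow_nonneg (div_nonneg (hp0 x) (hq0 x)) _)
  have hgm : Measurable g := ((hp0m.pow measurable_const).sub (hqm.pow measurable_const)).abs
  have hhm : Measurable h := (hp0m.pow measurable_const).mul ((hpm.div hqm).pow measurable_const)
  -- `h ^ s` is the integrand of `hIntsr`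
  have hhs : ∀ x, h x ^ s = (p x / q x) ^ (s / r) * p0 x := by
    intro x
    have hd0 : 0 ≤ p x / q x := div_nonneg (hp0 x) (hq0 x)
    rw [hh]
    rw [Real.mul_rpow (Real.rpow_nonneg (hp00 x) _) (Real.rpow_nonneg hd0 _),
      ← Real.rpow_mul (hp00 x), ← Real.rpow_mul hd0]
    have h1 : (1 - 1 / r) * s = 1 := by
      rw [← hsinv]; field_simp
    have h2 : 1 / r * s = s / r := by ring
    rw [h1, h2, Real.rpow_one, mul_comm]
  -- `g ^ r` is the integrand of `hIntdr`
  have hgr : ∀ x, g x ^ r = |p0 x ^ (1 / r) - q x ^ (1 / r)| ^ r := fun x => rfl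
  -- pointwise bound
  have key : ∀ x, (p x / q x) ^ (1 / r) * p0 x
      ≤ p0 x ^ (1 - 1 / r) * p x ^ (1 / r) + g x * h x := by
    intro x
    have hRHS0 : 0 ≤ p0 x ^ (1 - 1 / r) * p x ^ (1 / r) + g x * h x :=
      add_nonneg (mul_nonneg (Real.rpow_nonneg (hp00 x) _) (Real.rpow_nonneg (hp0 x) _))
        (mul_nonneg (hg0 x) (hh0 x))
    rcases eq_or_lt_of_le (hq0 x) with hc | hc
    · -- q x = 0 : LHS is 0 by Lean's division convention
      rw [← hc, div_zero, Real.zero_rpow (by positivity), zero_mul]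
      exact hRHS0
    rcases eq_or_lt_of_le (hp00 x) with ha | ha
    · -- p0 x = 0
      have hz : (p x / q x) ^ (1 / r) * p0 x = 0 := by rw [← ha, mul_zero]
      rw [hz]
      exact hRHS0
    -- main case: q x > 0, p0 x > 0
    have e1 : (p x / q x) ^ (1 / r) * p0 x
        = h x * q x ^ (1 / r) + h x * (p0 x ^ (1 / r) - q x ^ (1 / r)) := by
      have : h x * q x ^ (1 / r) + h x * (p0 x ^ (1 / r) - q x ^ (1 / r))
          = h x * p0 x ^ (1 / r) := by ring
      rw [this, hh]
      rw [mul_assoc, mul_comm ((p x / q x) ^ (1 / r)) (p0 x ^ (1 / r)), ← mul_assoc,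
        ← Real.rpow_add ha]
      norm_num
      rw [mul_comm]
    have e2 : h x * q x ^ (1 / r) = p0 x ^ (1 - 1 / r) * p x ^ (1 / r) := by
      rw [hh, mul_assoc, ← Real.mul_rpow (div_nonneg (hp0 x) (hq0 x)) (hq0 x),
        div_mul_cancel₀ _ (ne_of_gt hc)]
    have e3 : h x * (p0 x ^ (1 / r) - q x ^ (1 / r)) ≤ g x * h x := by
      rw [mul_comm (g x) (h x)]
      exact mul_le_mul_of_nonneg_left (le_abs_self _) (hh0 x)
    rw [e1, e2]
    exact add_le_add (le_refl _) e3
  -- membership in ℒ^r and ℒ^s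
  have hgLp : MemLp g (ENNReal.ofReal r) μ := by
    apply memLp_of_integrable_abs_rpow hgm.aestronglyMeasurable hr0
    simpa [hg, abs_abs] using hIntdr
  have hhLp : MemLp h (ENNReal.ofReal s) μ := by
    apply memLp_of_integrable_abs_rpow hhm.aestronglyMeasurable hs0
    have : (fun x => |h x| ^ s) = fun x => (p x / q x) ^ (s / r) * p0 x := by
      funext x
      rw [abs_of_nonneg (hh0 x), hhs x]
    rw [this]
    exact hIntsr
  -- integrability of the product g * h
  have hpqr : (1 : ℝ≥0∞) / 1 = 1 / ENNReal.ofReal r + 1 / ENNReal.ofReal s := by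
    rw [one_div, one_div, one_div, inv_one,
      ← ENNReal.ofReal_inv_of_pos hr0, ← ENNReal.ofReal_inv_of_pos hs0,
      ← ENNReal.ofReal_add (inv_nonneg.2 hr0.le) (inv_nonneg.2 hs0.le)]
    rw [show r⁻¹ + s⁻¹ = 1 by rw [← one_div, ← one_div]; exact hrs, ENNReal.ofReal_one]
  have hghInt : Integrable (fun x => g x * h x) μ := by
    rw [← memLp_one_iff_integrable]
    haveI : ENNReal.HolderTriple (ENNReal.ofReal r) (ENNReal.ofReal s) 1 := ⟨by simpa only [one_div] using hpqr.symm⟩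
    exact MemLp.smul hhLp hgLp
  -- Hölder's inequality
  have holder : ∫ x, g x * h x ∂μ
      ≤ (∫ x, g x ^ r ∂μ) ^ (1 / r) * (∫ x, h x ^ s ∂μ) ^ (1 / s) :=
    integral_mul_le_Lp_mul_Lq_of_nonneg hconj
      (Filter.Eventually.of_forall hg0) (Filter.Eventually.of_forall hh0) hgLp hhLp
  have hgr' : ∫ x, g x ^ r ∂μ = ∫ x, |p0 x ^ (1 / r) - q x ^ (1 / r)| ^ r ∂μ := rfl
  have hhs' : ∫ x, h x ^ s ∂μ = ∫ x, (p x / q x) ^ (s / r) * p0 x ∂μ :=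
    integral_congr_ae (Filter.Eventually.of_forall hhs)
  rw [hgr', hhs'] at holder
  calc ∫ x, (p x / q x) ^ (1 / r) * p0 x ∂μ
      ≤ ∫ x, (p0 x ^ (1 - 1 / r) * p x ^ (1 / r) + g x * h x) ∂μ := by
        apply integral_mono hIntLHS (hIntHT.add hghInt)
        exact key
    _ = (∫ x, p0 x ^ (1 - 1 / r) * p x ^ (1 / r) ∂μ) + ∫ x, g x * h x ∂μ :=
        integral_add hIntHT hghInt
    _ ≤ (∫ x, p0 x ^ (1 - 1 / r) * p x ^ (1 / r) ∂μ)
        + (∫ x, |p0 x ^ (1 / r) - q x ^ (1 / r)| ^ r ∂μ) ^ (1 / r)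
          * (∫ x, (p x / q x) ^ (s / r) * p0 x ∂μ) ^ (1 / s) :=
        add_le_add (le_refl _) holder
end
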